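/- Let A = {(a,b,c) ∈ ℕ³ : a + b ≤ 1 and c ≤ 7}, a set of 24 lattice points (the lattice points of the triangular column γ₇, a unit triangle times a segment of length 7). Then there exist 6 points t₁,…,t₆ ∈ (ℂ∖{0})³ such that the only polynomial P ∈ ℂ[x₁,x₂,x₃] with support contained in A for which P and its three first partial derivatives vanish at every tᵢ is P = 0. (Equivalently: ℙ¹×ℙ² embedded in ℙ²³ via p₁*O_{ℙ¹}(7) ⊗ p₂*O_{ℙ²}(1) is not 5-defective.) -/

import Mathlib

open Polynomial in
private lemma univ_core (f g h : Polynomial ℂ) (hf : f.natDegree ≤ 7) (hg : g.natDegree ≤ 7)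
    (hh : h.natDegree ≤ 7) (z : Fin 6 → ℂ) (hz : Function.Injective z)
    (e0 : ∀ i, f.eval (z i) = 0) (e1 : ∀ i, g.eval (z i) = 0) (e2 : ∀ i, h.eval (z i) = 0)
    (e3 : ∀ i, f.derivative.eval (z i) + (z i)^2 * g.derivative.eval (z i)
      + (z i)^4 * h.derivative.eval (z i) = 0) :
    f = 0 ∧ g = 0 ∧ h = 0 := by
  classical
  set T : Polynomial ℂ := f + X^2 * g + X^4 * h with hTdef
  have hT11 : T.natDegree ≤ 11 := by
    refine (natDegree_add_le _ _).trans (max_le ((natDegree_add_le _ _).trans (max_le ?_ ?_)) ?_)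
    · omega
    · exact (natDegree_mul_le).trans (by simp [natDegree_X_pow]; omega)
    · exact (natDegree_mul_le).trans (by simp [natDegree_X_pow]; omega)
  have hTroot : ∀ i, T.eval (z i) = 0 := by
    intro i; simp [hTdef, e0 i, e1 i, e2 i]
  have hT'root : ∀ i, T.derivative.eval (z i) = 0 := by
    intro i
    have hder : T.derivative = derivative f + (C 2 * X * g + X^2 * derivative g)
        + (C 4 * X^3 * h + X^4 * derivative h) := by
      simp [hTdef, derivative_mul, derivative_X_pow]
      have h4 : (C 4 : ℂ[X]) = C 3 + 1 := by rw [← C_1, ← C_add]; norm_num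
      rw [h4, show (C 2 : ℂ[X]) = 1 + 1 by rw [← C_1, ← C_add]; norm_num]
    rw [hder]
    simp [e1 i, e2 i]
    linear_combination e3 i
  have hT : T = 0 := by
    by_contra hne
    have hcount : ∀ i, 1 < T.rootMultiplicity (z i) := fun i =>
      (one_lt_rootMultiplicity_iff_isRoot hne).2 ⟨hTroot i, hT'root i⟩
    have h12 : 12 ≤ ∑ a ∈ Finset.univ.image z, T.roots.count a := by
      rw [Finset.sum_image (fun i _ j _ hij => hz hij)]
      have : ∀ i : Fin 6, 2 ≤ T.roots.count (z i) := by
        intro i; rw [count_roots]; exact hcount i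
      calc (12:ℕ) = ∑ _i : Fin 6, 2 := by simp
        _ ≤ _ := Finset.sum_le_sum (fun i _ => this i)
    have hle : ∑ a ∈ Finset.univ.image z, T.roots.count a ≤ Multiset.card T.roots := by
      rw [← Multiset.toFinset_sum_count_eq]
      apply Finset.sum_le_sum_of_subset
      intro a ha
      simp only [Finset.mem_image, Finset.mem_univ, true_and] at ha
      obtain ⟨i, rfl⟩ := ha
      rw [Multiset.mem_toFinset, ← Multiset.count_pos, count_roots]
      exact lt_trans one_pos (hcount i)
    have hcard := T.card_roots'
    omega
  have hcoef : ∀ n, f.coeff n + (if 2 ≤ n then g.coeff (n-2) else 0)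
      + (if 4 ≤ n then h.coeff (n-4) else 0) = 0 := by
    intro n
    have := congrArg (fun p => Polynomial.coeff p n) hT
    simpa [hTdef, coeff_X_pow_mul'] using this
  have hfz : ∀ n, 7 < n → f.coeff n = 0 := fun n hn => coeff_eq_zero_of_natDegree_lt (by omega)
  have hgz : ∀ n, 7 < n → g.coeff n = 0 := fun n hn => coeff_eq_zero_of_natDegree_lt (by omega)
  have hhz : ∀ n, 7 < n → h.coeff n = 0 := fun n hn => coeff_eq_zero_of_natDegree_lt (by omega)
  have hh7 : h.coeff 7 = 0 := by
    have := hcoef 11; simp [hfz 11 (by omega), hgz 9 (by omega)] at this; exact this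
  have hh6 : h.coeff 6 = 0 := by
    have := hcoef 10; simp [hfz 10 (by omega), hgz 8 (by omega)] at this; exact this
  have hh5 : h.natDegree ≤ 5 := by
    rw [natDegree_le_iff_coeff_eq_zero]
    intro N hN
    by_cases h8 : 8 ≤ N
    · exact hhz N (by omega)
    · have : N = 6 ∨ N = 7 := by omega
      rcases this with rfl | rfl
      · exact hh6
      · exact hh7
  have hhzero : h = 0 := by
    refine eq_zero_of_natDegree_lt_card_of_eval_eq_zero h hz e2 ?_
    simpa using by omega
  have hg7 : g.coeff 7 = 0 := by
    have := hcoef 9; simp [hfz 9 (by omega), hhzero] at this; exact this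
  have hg6 : g.coeff 6 = 0 := by
    have := hcoef 8; simp [hfz 8 (by omega), hhzero] at this; exact this
  have hg5 : g.natDegree ≤ 5 := by
    rw [natDegree_le_iff_coeff_eq_zero]
    intro N hN
    by_cases h8 : 8 ≤ N
    · exact hgz N (by omega)
    · have : N = 6 ∨ N = 7 := by omega
      rcases this with rfl | rfl
      · exact hg6
      · exact hg7
  have hgzero : g = 0 := by
    refine eq_zero_of_natDegree_lt_card_of_eval_eq_zero g hz e1 ?_
    simpa using by omega
  have hfzero : f = 0 := by
    have : f = T - X^2 * g - X^4 * h := by rw [hTdef]; ring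
    rw [this, hT, hgzero, hhzero]; ring
  exact ⟨hfzero, hgzero, hhzero⟩

open MvPolynomial in
private noncomputable def Abar : Polynomial ℂ →ₐ[ℂ] MvPolynomial (Fin 3) ℂ :=
  Polynomial.aeval (MvPolynomial.X 2)

private lemma eval_Abar (t : Fin 3 → ℂ) (f : Polynomial ℂ) :
    MvPolynomial.eval t (Abar f) = f.eval (t 2) := by
  induction f using Polynomial.induction_on' with
  | add p q hp hq => simp [map_add, hp, hq]
  | monomial n a => simp [Abar, Polynomial.aeval_monomial, MvPolynomial.algebraMap_eq]

private lemma pderiv_Abar (j : Fin 3) (f : Polynomial ℂ) :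
    MvPolynomial.pderiv j (Abar f) = if j = 2 then Abar f.derivative else 0 := by
  induction f using Polynomial.induction_on' with
  | add p q hp hq =>
    simp only [map_add, hp, hq]
    split_ifs <;> simp
  | monomial n a =>
    simp only [Abar, Polynomial.aeval_monomial, MvPolynomial.algebraMap_eq,
      Polynomial.derivative_monomial, map_mul]
    rw [Derivation.leibniz, MvPolynomial.pderiv_C]
    rw [MvPolynomial.pderiv_pow]
    by_cases hj : j = (2 : Fin 3)
    · subst hj
      simp [Polynomial.aeval_monomial, MvPolynomial.algebraMap_eq, smul_eq_mul]
      ring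
    · simp [MvPolynomial.pderiv_X_of_ne (Ne.symm hj)]
      simp [hj]

open MvPolynomial in
private lemma decomp (P : MvPolynomial (Fin 3) ℂ)
    (hP : ∀ s ∈ P.support, s 0 + s 1 ≤ 1 ∧ s 2 ≤ 7) :
    ∃ f g h : Polynomial ℂ, f.natDegree ≤ 7 ∧ g.natDegree ≤ 7 ∧ h.natDegree ≤ 7 ∧
      P = Abar f + MvPolynomial.X 0 * Abar g + MvPolynomial.X 1 * Abar h := by
  classical
  set s0 := P.support.filter (fun m => m 0 = 0 ∧ m 1 = 0) with hs0
  set s1 := P.support.filter (fun m => m 0 = 1) with hs1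
  set s2 := P.support.filter (fun m => m 1 = 1) with hs2
  refine ⟨∑ m ∈ s0, Polynomial.C (P.coeff m) * Polynomial.X ^ (m 2),
          ∑ m ∈ s1, Polynomial.C (P.coeff m) * Polynomial.X ^ (m 2),
          ∑ m ∈ s2, Polynomial.C (P.coeff m) * Polynomial.X ^ (m 2), ?_, ?_, ?_, ?_⟩
  · refine Polynomial.natDegree_sum_le_of_forall_le _ _ (fun m hm => ?_)
    refine (Polynomial.natDegree_C_mul_le _ _).trans ?_
    simp only [Polynomial.natDegree_X_pow]
    exact (hP m (Finset.mem_filter.1 hm).1).2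
  · refine Polynomial.natDegree_sum_le_of_forall_le _ _ (fun m hm => ?_)
    refine (Polynomial.natDegree_C_mul_le _ _).trans ?_
    simp only [Polynomial.natDegree_X_pow]
    exact (hP m (Finset.mem_filter.1 hm).1).2
  · refine Polynomial.natDegree_sum_le_of_forall_le _ _ (fun m hm => ?_)
    refine (Polynomial.natDegree_C_mul_le _ _).trans ?_
    simp only [Polynomial.natDegree_X_pow]
    exact (hP m (Finset.mem_filter.1 hm).1).2
  · have hA : ∀ (s : Finset (Fin 3 →₀ ℕ)),
        Abar (∑ m ∈ s, Polynomial.C (P.coeff m) * Polynomial.X ^ (m 2)) =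
          ∑ m ∈ s, monomial (Finsupp.single 2 (m 2)) (P.coeff m) := by
      intro s
      rw [map_sum]
      refine Finset.sum_congr rfl (fun m _ => ?_)
      simp [Abar, X_pow_eq_monomial, C_mul_monomial]
    rw [hA, hA, hA, Finset.mul_sum, Finset.mul_sum]
    have hX0 : ∀ m ∈ s1, MvPolynomial.X (0 : Fin 3) *
        monomial (Finsupp.single 2 (m 2)) (P.coeff m) = monomial m (P.coeff m) := by
      intro m hm
      rw [Finset.mem_filter] at hm
      have hm1 : m 1 = 0 := by have := (hP m hm.1).1; omega
      have hme : ((Finsupp.single (0:Fin 3) 1) + Finsupp.single 2 (m 2) : Fin 3 →₀ ℕ) = m := by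
        ext l; fin_cases l <;> simp [Finsupp.single_apply, hm.2, hm1]
      rw [MvPolynomial.X, MvPolynomial.monomial_mul, one_mul, hme]
    have hX1 : ∀ m ∈ s2, MvPolynomial.X (1 : Fin 3) *
        monomial (Finsupp.single 2 (m 2)) (P.coeff m) = monomial m (P.coeff m) := by
      intro m hm
      rw [Finset.mem_filter] at hm
      have hm0 : m 0 = 0 := by have := (hP m hm.1).1; omega
      have hme : ((Finsupp.single (1:Fin 3) 1) + Finsupp.single 2 (m 2) : Fin 3 →₀ ℕ) = m := by
        ext l; fin_cases l <;> simp [Finsupp.single_apply, hm.2, hm0]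
      rw [MvPolynomial.X, MvPolynomial.monomial_mul, one_mul, hme]
    have hX2 : ∀ m ∈ s0, (monomial (Finsupp.single 2 (m 2)) (P.coeff m) : MvPolynomial (Fin 3) ℂ)
        = monomial m (P.coeff m) := by
      intro m hm
      rw [Finset.mem_filter] at hm
      have hme : (Finsupp.single (2:Fin 3) (m 2) : Fin 3 →₀ ℕ) = m := by
        ext l; fin_cases l <;> simp [Finsupp.single_apply, hm.2.1, hm.2.2]
      rw [hme]
    rw [Finset.sum_congr rfl hX2, Finset.sum_congr rfl hX0, Finset.sum_congr rfl hX1]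
    have hd01 : Disjoint s0 s1 := by
      rw [Finset.disjoint_left]
      intro m hm hm'
      rw [Finset.mem_filter] at hm hm'
      omega
    have hd02 : Disjoint (s0 ∪ s1) s2 := by
      rw [Finset.disjoint_left]
      intro m hm hm'
      rw [Finset.mem_union, Finset.mem_filter, Finset.mem_filter] at hm
      rw [Finset.mem_filter] at hm'
      have := (hP m hm'.1).1
      omega
    rw [← Finset.sum_union hd01, ← Finset.sum_union hd02]
    have hu : s0 ∪ s1 ∪ s2 = P.support := by
      apply Finset.Subset.antisymm
      · intro m hm
        simp only [Finset.mem_union, Finset.mem_filter, hs0, hs1, hs2] at hm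
        tauto
      · intro m hm
        have h01 := (hP m hm).1
        simp only [Finset.mem_union, Finset.mem_filter, hs0, hs1, hs2]
        have : (m 0 = 0 ∧ m 1 = 0) ∨ m 0 = 1 ∨ m 1 = 1 := by omega
        tauto
    rw [hu, ← MvPolynomial.as_sum]

/-- The toric variety of the triangular column `γ₇` (a unit triangle times a segment of
length 7, 24 lattice points), namely `ℙ¹×ℙ²` embedded in `ℙ²³` via
`p₁*O_{ℙ¹}(7) ⊗ p₂*O_{ℙ²}(1)`, is not 5-defective. -/
theorem column_gamma_seven_not_defective :
    Nat.card {v : Fin 3 → ℕ // v 0 + v 1 ≤ 1 ∧ v 2 ≤ 7} = 24 ∧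
    ∃ t : Fin 6 → (Fin 3 → ℂ),
      (∀ i l, t i l ≠ 0) ∧
      ∀ P : MvPolynomial (Fin 3) ℂ,
        (∀ s ∈ P.support, s 0 + s 1 ≤ 1 ∧ s 2 ≤ 7) →
        (∀ i, MvPolynomial.eval (t i) P = 0 ∧
          ∀ j, MvPolynomial.eval (t i) (MvPolynomial.pderiv j P) = 0) →
        P = 0 := by
  constructor
  · have e : {v : Fin 3 → ℕ // v 0 + v 1 ≤ 1 ∧ v 2 ≤ 7} ≃ Fin 3 × Fin 8 :=
      { toFun := fun v => (⟨2 * v.1 1 + v.1 0, by have := v.2.1; omega⟩,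
          ⟨v.1 2, by have := v.2.2; omega⟩)
        invFun := fun p => ⟨![p.1.val % 2, p.1.val / 2, p.2.val],
          by
            constructor
            · show p.1.val % 2 + p.1.val / 2 ≤ 1
              have := p.1.isLt; omega
            · show (p.2.val : ℕ) ≤ 7
              have := p.2.isLt; omega⟩
        left_inv := by
          rintro ⟨v, hv1, hv2⟩
          apply Subtype.ext
          funext l
          fin_cases l
          · show (2 * v 1 + v 0) % 2 = v 0; omega
          · show (2 * v 1 + v 0) / 2 = v 1; omega
          · rfl
        right_inv := by
          rintro ⟨a, b⟩
          have := a.isLt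
          refine Prod.ext (Fin.ext ?_) (Fin.ext ?_)
          · show 2 * (a.val / 2) + a.val % 2 = a.val; omega
          · rfl }
    rw [Nat.card_congr e]
    simp
  · set z : Fin 6 → ℂ := fun i => ((i : ℕ) : ℂ) + 1 with hzdef
    have hzne : ∀ i, z i ≠ 0 := fun i => Nat.cast_add_one_ne_zero (i : ℕ)
    have hzinj : Function.Injective z := by
      intro i j hij
      have h1 : ((i : ℕ) : ℂ) = ((j : ℕ) : ℂ) := by
        simpa [hzdef] using hij
      have h2 : (i : ℕ) = (j : ℕ) := Nat.cast_injective h1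
      exact Fin.ext h2
    refine ⟨fun i => ![(z i)^2, (z i)^4, z i], ?_, ?_⟩
    · intro i l
      fin_cases l
      · exact pow_ne_zero _ (hzne i)
      · exact pow_ne_zero _ (hzne i)
      · exact hzne i
    · intro P hsupp hcond
      obtain ⟨f, g, h, hf, hg, hh, hPdec⟩ := decomp P hsupp
      have hd10 : MvPolynomial.pderiv (0:Fin 3) (MvPolynomial.X (1:Fin 3) : MvPolynomial (Fin 3) ℂ) = 0 :=
        MvPolynomial.pderiv_X_of_ne (by decide)
      have hd01 : MvPolynomial.pderiv (1:Fin 3) (MvPolynomial.X (0:Fin 3) : MvPolynomial (Fin 3) ℂ) = 0 :=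
        MvPolynomial.pderiv_X_of_ne (by decide)
      have hd20 : MvPolynomial.pderiv (2:Fin 3) (MvPolynomial.X (0:Fin 3) : MvPolynomial (Fin 3) ℂ) = 0 :=
        MvPolynomial.pderiv_X_of_ne (by decide)
      have hd21 : MvPolynomial.pderiv (2:Fin 3) (MvPolynomial.X (1:Fin 3) : MvPolynomial (Fin 3) ℂ) = 0 :=
        MvPolynomial.pderiv_X_of_ne (by decide)
      have hp0 : MvPolynomial.pderiv (0:Fin 3) P = Abar g := by
        rw [hPdec]
        simp [MvPolynomial.pderiv_mul, pderiv_Abar, hd10,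
          MvPolynomial.pderiv_X_self, show (0:Fin 3) ≠ 2 by decide]
      have hp1 : MvPolynomial.pderiv (1:Fin 3) P = Abar h := by
        rw [hPdec]
        simp [MvPolynomial.pderiv_mul, pderiv_Abar, hd01,
          MvPolynomial.pderiv_X_self, show (1:Fin 3) ≠ 2 by decide]
      have hp2 : MvPolynomial.pderiv (2:Fin 3) P = Abar f.derivative
          + MvPolynomial.X 0 * Abar g.derivative + MvPolynomial.X 1 * Abar h.derivative := by
        rw [hPdec]
        simp [MvPolynomial.pderiv_mul, pderiv_Abar, hd20, hd21]
      have e1 : ∀ i, g.eval (z i) = 0 := by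
        intro i
        have := (hcond i).2 0
        rw [hp0, eval_Abar] at this
        simpa using this
      have e2 : ∀ i, h.eval (z i) = 0 := by
        intro i
        have := (hcond i).2 1
        rw [hp1, eval_Abar] at this
        simpa using this
      have e0 : ∀ i, f.eval (z i) = 0 := by
        intro i
        have h1 := (hcond i).1
        rw [hPdec] at h1
        simp only [map_add, map_mul, MvPolynomial.eval_X, eval_Abar] at h1
        simp only [Matrix.cons_val_zero, Matrix.cons_val_one, Matrix.head_cons,
          Matrix.cons_val_two, Matrix.tail_cons] at h1
        rw [e1 i, e2 i] at h1
        simpa using h1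
      have e3 : ∀ i, f.derivative.eval (z i) + (z i)^2 * g.derivative.eval (z i)
          + (z i)^4 * h.derivative.eval (z i) = 0 := by
        intro i
        have h1 := (hcond i).2 2
        rw [hp2] at h1
        simp only [map_add, map_mul, MvPolynomial.eval_X, eval_Abar] at h1
        simpa [Matrix.cons_val_zero, Matrix.cons_val_one, Matrix.head_cons,
          Matrix.cons_val_two, Matrix.tail_cons] using h1
      obtain ⟨hf0, hg0, hh0⟩ := univ_core f g h hf hg hh z hzinj e0 e1 e2 e3
      rw [hPdec, hf0, hg0, hh0]
      simp
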